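/- arXiv:2408.00391 — 3 statements merged into one kernel-verified Lean document; each statement's English description precedes it below -/
import Mathlib

section
/- For the Lie algebra sl2 with its 3-cocycle κ(x,y,z) = (x,[y,z]) defined via the rescaled Killing form with (x_3,x_3)=1, (x_+,x_-)=(x_-,x_+)=1/2, and the invariant symmetric tensor π = λ(x_+ ⊙ x_- + (1/4) x_3 ⊙ x_3) with λ ≠ 0, there exists NO linear map π̃: sl2 → sl2 satisfying both (π̃⊗id)(π) + (id⊗π̃)(π) = 0 and π̃([x,y]) = [π̃(x),y] + [x,π̃(y)] + (κ(x,y,-)⊗id)(π) + (id⊗κ(x,y,-))(π) for all x,y ∈ sl2. -/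
open TensorProduct

/-- For `sl₂` with the 3-cocycle `κ(x,y,z) = (x,[y,z])` given by the
rescaled Killing form (so `κ(x₊,x₋,x₃) = 1`), and the invariant symmetric tensor
`π = λ(x₊ ⊙ x₋ + (1/4) x₃ ⊙ x₃)` with `λ ≠ 0`, there exists NO linear map
`π̃ : sl₂ → sl₂` satisfying both `(π̃⊗id)(π) + (id⊗π̃)(π) = 0` and
`π̃([x,y]) = [π̃x,y] + [x,π̃y] + (κ(x,y,-)⊗id)(π) + (id⊗κ(x,y,-))(π)`. -/
theorem stmt_3 {K : Type*} [Field K] [CharZero K]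
    {L : Type*} [LieRing L] [LieAlgebra K L]
    (e : Module.Basis (Fin 3) K L)
    (h01 : ⁅e 0, e 1⁆ = e 2)
    (h20 : ⁅e 2, e 0⁆ = (2 : K) • e 0)
    (h21 : ⁅e 2, e 1⁆ = (-2 : K) • e 1)
    (κ : L →ₗ[K] L →ₗ[K] L →ₗ[K] K)
    (hκ1 : ∀ u v w : L, κ u v w = - κ v u w)
    (hκ2 : ∀ u v w : L, κ u v w = - κ u w v)
    (hκval : κ (e 0) (e 1) (e 2) = 1)
    (lam : K) (hlam : lam ≠ 0)
    (π : L ⊗[K] L)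
    (hπ : π = lam • (e 0 ⊗ₜ[K] e 1 + e 1 ⊗ₜ[K] e 0 + (2 : K)⁻¹ • (e 2 ⊗ₜ[K] e 2))) :
    ¬ ∃ p : L →ₗ[K] L,
        (LinearMap.rTensor L p + LinearMap.lTensor L p) π = 0 ∧
        ∀ x y : L,
          p ⁅x, y⁆ = ⁅p x, y⁆ + ⁅x, p y⁆
            + (TensorProduct.lid K L) (LinearMap.rTensor L (κ x y) π)
            + (TensorProduct.rid K L) (LinearMap.lTensor L (κ x y) π) := by
  rintro ⟨p, h1, h2⟩
  -- κ basis values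
  have k00 : κ (e 2) (e 0) (e 0) = 0 := by
    have h := hκ2 (e 2) (e 0) (e 0); linear_combination h/2
  have k22 : κ (e 2) (e 0) (e 2) = 0 := by
    have a := hκ1 (e 2) (e 0) (e 2)
    have b := hκ2 (e 0) (e 2) (e 2)
    linear_combination a - b/2
  have k01 : κ (e 2) (e 0) (e 1) = 1 := by
    have a := hκ1 (e 2) (e 0) (e 1)
    have b := hκ2 (e 0) (e 2) (e 1)
    rw [hκval] at b
    linear_combination a - b
  -- coordinate functionals
  have hrep : ∀ v : L, v = e.repr v 0 • e 0 + e.repr v 1 • e 1 + e.repr v 2 • e 2 := by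
    intro v
    have := e.sum_repr v
    rw [Fin.sum_univ_three] at this
    exact this.symm
  set A00 := e.repr (p (e 0)) 0 with hA00
  set A01 := e.repr (p (e 0)) 1 with hA01
  set A02 := e.repr (p (e 0)) 2 with hA02
  set A20 := e.repr (p (e 2)) 0 with hA20
  set A21 := e.repr (p (e 2)) 1 with hA21
  set A22 := e.repr (p (e 2)) 2 with hA22
  have hp0 : p (e 0) = A00 • e 0 + A01 • e 1 + A02 • e 2 := hrep _
  have hp2 : p (e 2) = A20 • e 0 + A21 • e 1 + A22 • e 2 := hrep _
  -- derived brackets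
  have h10 : ⁅e 1, e 0⁆ = -(e 2) := by rw [← lie_skew, h01]
  -- Equation from h2 at (e 2, e 0), coordinate 0:
  have E := h2 (e 2) (e 0)
  rw [h20, hπ, hp0, hp2] at E
  simp only [map_add, map_smul, LinearMap.rTensor_tmul, LinearMap.lTensor_tmul,
    TensorProduct.lid_tmul, TensorProduct.rid_tmul, LinearMap.id_coe, id_eq,
    k00, k01, k22, zero_smul, one_smul, smul_add, smul_smul, add_zero, zero_add,
    add_lie, lie_add, smul_lie, lie_smul, lie_self, h20, h10, h01, h21,
    smul_neg, smul_zero] at E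
  rw [hp0] at E
  have E0 := congrArg (fun v => e.repr v 0) E
  simp [map_add, map_smul, map_neg, Module.Basis.repr_self, Finsupp.single_apply,
    smul_eq_mul] at E0
  have hA : A22 = -lam := by linear_combination -E0/2
  -- now the invariance condition, e2⊗e2 coefficient
  set A10 := e.repr (p (e 1)) 0 with hA10
  set A11 := e.repr (p (e 1)) 1 with hA11
  set A12 := e.repr (p (e 1)) 2 with hA12
  have hp1 : p (e 1) = A10 • e 0 + A11 • e 1 + A12 • e 2 := hrep _
  have F := congrArg (fun t => (TensorProduct.lid K K) (TensorProduct.map (e.coord 2) (e.coord 2) t)) h1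
  simp only [hπ, hp0, hp1, hp2, map_add, map_smul, LinearMap.rTensor_tmul,
    LinearMap.lTensor_tmul, TensorProduct.map_tmul, TensorProduct.lid_tmul,
    LinearMap.id_coe, id_eq, Module.Basis.coord_apply, Module.Basis.repr_self, map_zero] at F
  simp [Finsupp.single_apply, smul_eq_mul] at F
  rcases F with F | F
  · exact hlam F
  · rw [← hA22, hA] at F
    exact hlam (neg_eq_zero.mp F)
end

section
/- Let heis be the Heisenberg Lie algebra with basis x, y, z, bracket [x,y]=z, and 3-cocycle κ with κ(x,y,z)=1 (totally antisymmetric, all other basis evaluations determined by antisymmetry or zero). Fix λ ≠ 0 and let π = (λ/2) z ⊙ z. Then a linear map π̃: heis → heis satisfies (π̃⊗id)(π)+(id⊗π̃)(π)=0 and π̃([u,v]) = [π̃(u),v]+[u,π̃(v)] + (κ(u,v,-)⊗id)(π)+(id⊗κ(u,v,-))(π) for all u,v ∈ heis, if and only if π̃(z)=0 and there exist a,b,c,d,e ∈ K with π̃(x)=a x + b y + c z and π̃(y)=d x - (a+λ) y + e z. -/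
open TensorProduct

set_option maxHeartbeats 1600000 in
/-- For the Heisenberg Lie algebra with basis `x = e 0`, `y = e 1`,
`z = e 2`, bracket `⁅x,y⁆ = z`, 3-cocycle `κ` with `κ(x,y,z) = 1`, `λ ≠ 0` and
`π = (λ/2) z ⊗ z`, a linear map `π̃` satisfies `(π̃⊗id)(π) + (id⊗π̃)(π) = 0` and the
κ-corrected derivation property if and only if `π̃(z) = 0`, `π̃(x) = ax + by + cz`,
`π̃(y) = dx - (a+λ)y + ez` for some scalars `a b c d e`. -/
theorem stmt_4 {K : Type*} [Field K] [CharZero K]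
    {L : Type*} [LieRing L] [LieAlgebra K L]
    (e : Module.Basis (Fin 3) K L)
    (h01 : ⁅e 0, e 1⁆ = e 2) (h02 : ⁅e 0, e 2⁆ = 0) (h12 : ⁅e 1, e 2⁆ = 0)
    (κ : L →ₗ[K] L →ₗ[K] L →ₗ[K] K)
    (hκ1 : ∀ u v w : L, κ u v w = - κ v u w)
    (hκ2 : ∀ u v w : L, κ u v w = - κ u w v)
    (hκval : κ (e 0) (e 1) (e 2) = 1)
    (lam : K) (hlam : lam ≠ 0)
    (π : L ⊗[K] L)
    (hπ : π = (lam * (2 : K)⁻¹) • (e 2 ⊗ₜ[K] e 2))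
    (p : L →ₗ[K] L) :
    ((LinearMap.rTensor L p + LinearMap.lTensor L p) π = 0 ∧
      ∀ u v : L,
        p ⁅u, v⁆ = ⁅p u, v⁆ + ⁅u, p v⁆
          + (TensorProduct.lid K L) (LinearMap.rTensor L (κ u v) π)
          + (TensorProduct.rid K L) (LinearMap.lTensor L (κ u v) π))
    ↔ (p (e 2) = 0 ∧ ∃ a b c d f : K,
        p (e 0) = a • e 0 + b • e 1 + c • e 2 ∧
        p (e 1) = d • e 0 + (-(a + lam)) • e 1 + f • e 2) := by
  have hs : lam * (2:K)⁻¹ ≠ 0 := mul_ne_zero hlam (inv_ne_zero two_ne_zero)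
  -- bracket table
  have h00 : ⁅e 0, e 0⁆ = (0:L) := lie_self _
  have h11 : ⁅e 1, e 1⁆ = (0:L) := lie_self _
  have h22 : ⁅e 2, e 2⁆ = (0:L) := lie_self _
  have h10 : ⁅e 1, e 0⁆ = -e 2 := by rw [← lie_skew, h01]
  have h20 : ⁅e 2, e 0⁆ = (0:L) := by rw [← lie_skew, h02, neg_zero]
  have h21 : ⁅e 2, e 1⁆ = (0:L) := by rw [← lie_skew, h12, neg_zero]
  -- κ table at `e 2`
  have k002 : κ (e 0) (e 0) (e 2) = 0 := by
    have h := hκ1 (e 0) (e 0) (e 2); linear_combination ((2:K)⁻¹) * h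
  have k112 : κ (e 1) (e 1) (e 2) = 0 := by
    have h := hκ1 (e 1) (e 1) (e 2); linear_combination ((2:K)⁻¹) * h
  have k222 : κ (e 2) (e 2) (e 2) = 0 := by
    have h := hκ1 (e 2) (e 2) (e 2); linear_combination ((2:K)⁻¹) * h
  have k022 : κ (e 0) (e 2) (e 2) = 0 := by
    have h := hκ2 (e 0) (e 2) (e 2); linear_combination ((2:K)⁻¹) * h
  have k122 : κ (e 1) (e 2) (e 2) = 0 := by
    have h := hκ2 (e 1) (e 2) (e 2); linear_combination ((2:K)⁻¹) * h
  have k202 : κ (e 2) (e 0) (e 2) = 0 := by rw [hκ1, k022, neg_zero]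
  have k212 : κ (e 2) (e 1) (e 2) = 0 := by rw [hκ1, k122, neg_zero]
  have k102 : κ (e 1) (e 0) (e 2) = -1 := by rw [hκ1, hκval]
  -- the κ-correction term
  have hterm : ∀ u v : L, (TensorProduct.lid K L) (LinearMap.rTensor L (κ u v) π)
      + (TensorProduct.rid K L) (LinearMap.lTensor L (κ u v) π)
      = (lam * κ u v (e 2)) • e 2 := by
    intro u v
    rw [hπ]
    simp only [map_smul, LinearMap.rTensor_tmul, LinearMap.lTensor_tmul,
      TensorProduct.lid_tmul, TensorProduct.rid_tmul, smul_smul]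
    rw [← add_smul]
    congr 1
    field_simp
    ring
  constructor
  · rintro ⟨h1, h2⟩
    -- first: p (e 2) = 0
    have hsum : p (e 2) ⊗ₜ[K] e 2 + e 2 ⊗ₜ[K] p (e 2) = 0 := by
      simp only [LinearMap.add_apply, hπ, map_smul, LinearMap.rTensor_tmul,
        LinearMap.lTensor_tmul, ← smul_add, smul_eq_zero] at h1
      exact h1.resolve_left hs
    have hT := congrArg ((TensorProduct.lid K L).toLinearMap.comp
      (LinearMap.rTensor L (e.coord 2))) hsum
    simp only [map_add, map_zero, LinearMap.comp_apply, LinearMap.rTensor_tmul,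
      LinearEquiv.coe_coe, TensorProduct.lid_tmul, Module.Basis.coord_apply,
      Module.Basis.repr_self, Finsupp.single_eq_same, one_smul] at hT
    have hc : e.repr (p (e 2)) 2 = 0 := by
      have hT2 := congrArg (e.coord 2) hT
      simp only [map_add, map_smul, map_zero, Module.Basis.coord_apply, Module.Basis.repr_self,
        Finsupp.single_eq_same, smul_eq_mul, mul_one] at hT2
      linear_combination ((2:K)⁻¹) * hT2
    have hpz : p (e 2) = 0 := by
      rw [hc, zero_smul, zero_add] at hT; exact hT
    refine ⟨hpz, ?_⟩
    -- coordinates of p (e 0) and p (e 1)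
    have hx : p (e 0) = e.repr (p (e 0)) 0 • e 0 + e.repr (p (e 0)) 1 • e 1
        + e.repr (p (e 0)) 2 • e 2 := by
      have := e.sum_repr (p (e 0)); rw [Fin.sum_univ_three] at this
      exact this.symm
    have hy : p (e 1) = e.repr (p (e 1)) 0 • e 0 + e.repr (p (e 1)) 1 • e 1
        + e.repr (p (e 1)) 2 • e 2 := by
      have := e.sum_repr (p (e 1)); rw [Fin.sum_univ_three] at this
      exact this.symm
    set a := e.repr (p (e 0)) 0 with ha
    set b := e.repr (p (e 0)) 1
    set c := e.repr (p (e 0)) 2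
    set d := e.repr (p (e 1)) 0
    set g := e.repr (p (e 1)) 1 with hg
    set f := e.repr (p (e 1)) 2
    -- derivation property at (e 0, e 1)
    have key := h2 (e 0) (e 1)
    rw [add_assoc, hterm, hκval, mul_one, h01, hpz, hx, hy] at key
    have key2 := congrArg (fun w => e.repr w 2) key
    simp only [add_lie, lie_add, smul_lie, lie_smul, h00, h01, h02, h10, h11, h12,
      h20, h21, h22, smul_zero, zero_add, add_zero, smul_neg, map_add, map_smul,
      map_zero, map_neg, Module.Basis.repr_self, Finsupp.coe_add, Finsupp.coe_smul,
      Finsupp.coe_zero, Pi.add_apply, Pi.smul_apply, Pi.zero_apply, Pi.neg_apply,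
      Finsupp.coe_neg, Finsupp.single_apply, smul_eq_mul] at key2
    norm_num at key2
    refine ⟨a, b, c, d, f, hx, ?_⟩
    rw [hy, show g = -(a + lam) by linear_combination -key2]
  · rintro ⟨hpz, a, b, c, d, f, hx, hy⟩
    constructor
    · rw [hπ]
      simp only [LinearMap.add_apply, map_smul, LinearMap.rTensor_tmul,
        LinearMap.lTensor_tmul, hpz, TensorProduct.zero_tmul, TensorProduct.tmul_zero,
        smul_zero, add_zero, zero_add]
    · intro u v
      rw [add_assoc, hterm]
      obtain ⟨r0, r1, r2, rfl⟩ : ∃ r0 r1 r2 : K, u = r0 • e 0 + r1 • e 1 + r2 • e 2 := by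
        refine ⟨e.repr u 0, e.repr u 1, e.repr u 2, ?_⟩
        have := e.sum_repr u; rw [Fin.sum_univ_three] at this; exact this.symm
      obtain ⟨s0, s1, s2, rfl⟩ : ∃ s0 s1 s2 : K, v = s0 • e 0 + s1 • e 1 + s2 • e 2 := by
        refine ⟨e.repr v 0, e.repr v 1, e.repr v 2, ?_⟩
        have := e.sum_repr v; rw [Fin.sum_univ_three] at this; exact this.symm
      simp only [add_lie, lie_add, smul_lie, lie_smul, h00, h01, h02, h10, h11, h12,
        h20, h21, h22, map_add, map_smul, LinearMap.add_apply, LinearMap.smul_apply,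
        smul_eq_mul, k002, hκval, k022, k102, k112, k122, k202, k212, k222,
        hpz, hx, hy, smul_zero, zero_add, add_zero, smul_neg, mul_zero, mul_one,
        mul_neg, map_neg, map_zero, neg_zero]
      module
end

section
/- Let π = (1/2)π^{ab} s³∂_a s³∂_b be a constant bivector on CE(g) for a finite-dimensional Lie algebra g with structure constants f^c_{ab}, where d(s³∂_a) = -f^c_{ab} θ^b s³∂_c and d(θ^a) = -(1/2) f^a_{bc} θ^b θ^c. Then the Schouten-Nijenhuis self-bracket {π,π} vanishes automatically, and dπ = 0 if and only if f^a_{cd} π^{db} + f^b_{cd} π^{ad} = 0 for all a, b, c. Hence 2-shifted Poisson structures on CE(g) correspond bijectively to invariant symmetric tensors in (Sym² g)^g. -/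
noncomputable section

/-- A model of the (uncompleted) 2-shifted polyvector algebra
`K[θ^a][s³∂_a]` on `CE(g)`: the monoid algebra on the commuting weight variables
`ξ_a = s³∂_a` (degree 2) with coefficients in the exterior algebra on the odd
generators `θ^a` (degree 1). -/
abbrev CEPol (K : Type*) [Field K] (n : ℕ) : Type _ :=
  AddMonoidAlgebra (ExteriorAlgebra K (Fin n → K)) (Fin n →₀ ℕ)

/-- The weight variable `ξ_a = s³∂_a`. -/
def xiVar (K : Type*) [Field K] (n : ℕ) (a : Fin n) : CEPol K n :=
  AddMonoidAlgebra.single (Finsupp.single a 1) 1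

/-- The Chevalley-Eilenberg generator `θ^a`. -/
def thetaVar (K : Type*) [Field K] (n : ℕ) (a : Fin n) : CEPol K n :=
  AddMonoidAlgebra.single 0 (ExteriorAlgebra.ι K (Pi.single a (1 : K)))

/-- A scalar from `K`, viewed as a constant of the polyvector algebra. -/
def scal (K : Type*) [Field K] (n : ℕ) (c : K) : CEPol K n :=
  AddMonoidAlgebra.single 0 (algebraMap K (ExteriorAlgebra K (Fin n → K)) c)

section Aux

variable {K : Type*} [Field K] {n : ℕ}

lemma stmt18_scal_mul_single (c : K) (m : Fin n →₀ ℕ)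
    (x : ExteriorAlgebra K (Fin n → K)) :
    scal K n c * (AddMonoidAlgebra.single m x : CEPol K n)
      = AddMonoidAlgebra.single m (c • x) := by
  rw [scal, AddMonoidAlgebra.single_mul_single, zero_add, Algebra.smul_def]

lemma stmt18_theta_mul_xi (e c : Fin n) :
    thetaVar K n e * xiVar K n c
      = AddMonoidAlgebra.single (Finsupp.single c 1)
          (ExteriorAlgebra.ι K (Pi.single e (1 : K))) := by
  rw [thetaVar, xiVar, AddMonoidAlgebra.single_mul_single, zero_add, mul_one]

lemma stmt18_single_mul_xi (m : Fin n →₀ ℕ) (x : ExteriorAlgebra K (Fin n → K))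
    (b : Fin n) :
    (AddMonoidAlgebra.single m x : CEPol K n) * xiVar K n b
      = AddMonoidAlgebra.single (m + Finsupp.single b 1) x := by
  rw [xiVar, AddMonoidAlgebra.single_mul_single, mul_one]

lemma stmt18_xi_mul_single (a : Fin n) (m : Fin n →₀ ℕ)
    (x : ExteriorAlgebra K (Fin n → K)) :
    xiVar K n a * (AddMonoidAlgebra.single m x : CEPol K n)
      = AddMonoidAlgebra.single (Finsupp.single a 1 + m) x := by
  rw [xiVar, AddMonoidAlgebra.single_mul_single, one_mul]

lemma stmt18_pair_eq_iff {α : Type*} [DecidableEq α] (c' b' c b : α) :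
    (Finsupp.single c' 1 + Finsupp.single b' 1 : α →₀ ℕ)
      = Finsupp.single c 1 + Finsupp.single b 1
    ↔ (c' = c ∧ b' = b) ∨ (c' = b ∧ b' = c) := by
  constructor
  · intro h
    by_cases hc : c' = c
    · subst hc
      have := add_left_cancel h
      exact Or.inl ⟨rfl, (Finsupp.single_left_inj (one_ne_zero)).mp this⟩
    · have h1 := DFunLike.congr_fun h c'
      simp only [Finsupp.add_apply, Finsupp.single_apply, if_pos rfl] at h1
      rw [if_neg (fun hh : c = c' => hc hh.symm)] at h1
      have hb : b = c' := by
        by_cases hb : b = c'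
        · exact hb
        · rw [if_neg hb] at h1; split_ifs at h1 <;> omega
      subst hb
      refine Or.inr ⟨rfl, ?_⟩
      rw [add_comm (Finsupp.single c 1)] at h
      have := add_left_cancel h
      exact (Finsupp.single_left_inj (one_ne_zero)).mp this
  · rintro (⟨rfl, rfl⟩ | ⟨rfl, rfl⟩)
    · rfl
    · exact add_comm _ _

lemma stmt18_sum3_rot {M : Type*} [AddCommMonoid M] (F : Fin n → Fin n → Fin n → M) :
    (∑ a, ∑ b, ∑ c, F a b c) = ∑ c, ∑ b, ∑ a, F a b c := by
  calc (∑ a, ∑ b, ∑ c, F a b c)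
      = ∑ a, ∑ c, ∑ b, F a b c := Finset.sum_congr rfl fun a _ => Finset.sum_comm
    _ = ∑ c, ∑ a, ∑ b, F a b c := Finset.sum_comm
    _ = ∑ c, ∑ b, ∑ a, F a b c := Finset.sum_congr rfl fun c _ => Finset.sum_comm

lemma stmt18_sum3_swap {M : Type*} [AddCommMonoid M] (F : Fin n → Fin n → Fin n → M) :
    (∑ a, ∑ b, ∑ c, F a b c) = ∑ a, ∑ b, ∑ c, F a c b :=
  Finset.sum_congr rfl fun a _ => Finset.sum_comm

lemma stmt18_coord (k : Fin n → Fin n → K) (u : Fin n) :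
    (∑ a, ∑ e, k a e • (Pi.single e (1 : K) : Fin n → K)) u = ∑ a, k a u := by
  rw [Finset.sum_apply]
  refine Finset.sum_congr rfl fun a _ => ?_
  rw [Finset.sum_apply]
  simp [Pi.single_apply, Finset.sum_ite_eq]

lemma stmt18_single_sum {ι : Type*} (m : Fin n →₀ ℕ) (s : Finset ι)
    (g : ι → ExteriorAlgebra K (Fin n → K)) :
    (AddMonoidAlgebra.single m (∑ i ∈ s, g i) : CEPol K n)
      = ∑ i ∈ s, AddMonoidAlgebra.single m (g i) :=
  map_sum (AddMonoidAlgebra.singleAddHom (R := ExteriorAlgebra K (Fin n → K)) m) g s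

lemma stmt18_sum_pair {M : Type*} [AddCommMonoid M] {n : ℕ}
    (g : Fin n → Fin n → M) (a b : Fin n) :
    (∑ c' : Fin n, ∑ b' : Fin n, if c' = a ∧ b' = b then g c' b' else 0) = g a b := by
  have h1 : ∀ c' : Fin n, (∑ b' : Fin n, if c' = a ∧ b' = b then g c' b' else 0)
      = if c' = a then g c' b else 0 := by
    intro c'
    by_cases hc : c' = a
    · simp [hc, Finset.sum_ite_eq, Finset.sum_ite_eq']
    · simp [hc]
  simp [h1, Finset.sum_ite_eq, Finset.sum_ite_eq']

end Aux

set_option maxHeartbeats 2000000 in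
/-- Let `π = (1/2) π^{ab} s³∂_a s³∂_b` be a constant bivector on
`CE(g)` for an `n`-dimensional Lie algebra with structure constants `f`.  For any
additive differential `d` which is `K`-linear, satisfies the Leibniz rule on the
(even) weight generators and takes the Chevalley-Eilenberg values
`d(θ^a) = -(1/2) f^a_{bc} θ^b θ^c`, `d(s³∂_a) = -f^c_{ab} θ^b s³∂_c` on generators,
and any Schouten-Nijenhuis-type bracket `S` (biadditive, `K`-bilinear, a
biderivation on the even weight generators, vanishing on pairs of weight
generators), one has: the self-bracket `{π,π} = S π π` vanishes automatically, and
`d π = 0` if and only if `f^a_{cd} π^{db} + f^b_{cd} π^{ad} = 0` for all `a b c`.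
Hence 2-shifted Poisson structures on `CE(g)` correspond exactly to invariant
symmetric tensors. -/
theorem stmt_18 {K : Type*} [Field K] [CharZero K] {n : ℕ}
    (f : Fin n → Fin n → Fin n → K)
    (hfanti : ∀ c a b, f c a b = - f c b a)
    (hjac : ∀ a b c e : Fin n,
      (∑ d, (f e d a * f d b c + f e d b * f d c a + f e d c * f d a b)) = 0)
    (p : Fin n → Fin n → K) (hp : ∀ a b, p a b = p b a)
    (π : CEPol K n)
    (hπ : π = ∑ a, ∑ b, scal K n ((2 : K)⁻¹ * p a b) * (xiVar K n a * xiVar K n b))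
    (d : CEPol K n →+ CEPol K n)
    (hdC : ∀ (c : K) (x : CEPol K n), d (scal K n c * x) = scal K n c * d x)
    (hdθ : ∀ a, d (thetaVar K n a)
        = - ∑ b, ∑ c, scal K n ((2 : K)⁻¹ * f a b c)
            * (thetaVar K n b * thetaVar K n c))
    (hdX : ∀ a, d (xiVar K n a)
        = - ∑ c, ∑ b, scal K n (f c a b) * (thetaVar K n b * xiVar K n c))
    (hdL : ∀ a b, d (xiVar K n a * xiVar K n b)
        = d (xiVar K n a) * xiVar K n b + xiVar K n a * d (xiVar K n b))
    (S : CEPol K n →+ CEPol K n →+ CEPol K n)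
    (hSC₁ : ∀ (c : K) (x y : CEPol K n), S (scal K n c * x) y = scal K n c * S x y)
    (hSC₂ : ∀ (c : K) (x y : CEPol K n), S x (scal K n c * y) = scal K n c * S x y)
    (hSxx : ∀ a b, S (xiVar K n a) (xiVar K n b) = 0)
    (hSL₁ : ∀ a b (y : CEPol K n), S (xiVar K n a * xiVar K n b) y
        = xiVar K n a * S (xiVar K n b) y + S (xiVar K n a) y * xiVar K n b)
    (hSL₂ : ∀ (x : CEPol K n) (a b : Fin n), S x (xiVar K n a * xiVar K n b)
        = S x (xiVar K n a) * xiVar K n b + xiVar K n a * S x (xiVar K n b)) :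
    S π π = 0 ∧
      (d π = 0 ↔ ∀ a b c, (∑ e, (f a c e * p e b + f b c e * p a e)) = 0) := by
  constructor
  · -- the self-bracket vanishes
    have base : ∀ a b c e : Fin n,
        S (xiVar K n a * xiVar K n b) (xiVar K n c * xiVar K n e) = 0 := by
      intro a b c e
      rw [hSL₁, hSL₂, hSL₂, hSxx, hSxx, hSxx, hSxx]
      simp
    rw [hπ, map_sum]
    simp only [AddMonoidHom.finset_sum_apply, map_sum, hSC₁, hSC₂, base,
      mul_zero, Finset.sum_const_zero]
  · -- the differential condition
    -- the vector-valued coefficient of the monomial ξ_c ξ_b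
    set v : Fin n → Fin n → (Fin n → K) := fun c b =>
      ∑ a, ∑ e, (-((2:K)⁻¹ * (p a b * f c a e + p a c * f b a e)))
        • (Pi.single e (1 : K) : Fin n → K) with hv
    have hdxi1 : ∀ a b : Fin n, d (xiVar K n a) * xiVar K n b
        = -∑ c, ∑ e, AddMonoidAlgebra.single
            (Finsupp.single c 1 + Finsupp.single b 1 : Fin n →₀ ℕ)
            ((f c a e) • ExteriorAlgebra.ι K (Pi.single e (1:K))) := by
      intro a b
      rw [hdX, neg_mul, Finset.sum_mul]
      congr 1
      refine Finset.sum_congr rfl fun c _ => ?_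
      rw [Finset.sum_mul]
      refine Finset.sum_congr rfl fun e _ => ?_
      rw [stmt18_theta_mul_xi, stmt18_scal_mul_single, stmt18_single_mul_xi]
    have hdxi2 : ∀ a b : Fin n, xiVar K n a * d (xiVar K n b)
        = -∑ c, ∑ e, AddMonoidAlgebra.single
            (Finsupp.single a 1 + Finsupp.single c 1 : Fin n →₀ ℕ)
            ((f c b e) • ExteriorAlgebra.ι K (Pi.single e (1:K))) := by
      intro a b
      rw [hdX, mul_neg, Finset.mul_sum]
      congr 1
      refine Finset.sum_congr rfl fun c _ => ?_
      rw [Finset.mul_sum]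
      refine Finset.sum_congr rfl fun e _ => ?_
      rw [stmt18_theta_mul_xi, stmt18_scal_mul_single, stmt18_xi_mul_single]
    have hterm : ∀ a b : Fin n,
        d (scal K n ((2:K)⁻¹ * p a b) * (xiVar K n a * xiVar K n b))
        = (∑ c, ∑ e, AddMonoidAlgebra.single
              (Finsupp.single c 1 + Finsupp.single b 1 : Fin n →₀ ℕ)
              ((-((2:K)⁻¹ * (p a b * f c a e)))
                • ExteriorAlgebra.ι K (Pi.single e (1:K))))
          + (∑ c, ∑ e, AddMonoidAlgebra.single
              (Finsupp.single a 1 + Finsupp.single c 1 : Fin n →₀ ℕ)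
              ((-((2:K)⁻¹ * (p a b * f c b e)))
                • ExteriorAlgebra.ι K (Pi.single e (1:K)))) := by
      intro a b
      rw [hdC, hdL, hdxi1, hdxi2, mul_add, mul_neg, mul_neg]
      congr 1
      · rw [Finset.mul_sum, ← Finset.sum_neg_distrib]
        refine Finset.sum_congr rfl fun c _ => ?_
        rw [Finset.mul_sum, ← Finset.sum_neg_distrib]
        refine Finset.sum_congr rfl fun e _ => ?_
        rw [stmt18_scal_mul_single, smul_smul, ← AddMonoidAlgebra.single_neg, ← neg_smul]
        congr 1
        ring
      · rw [Finset.mul_sum, ← Finset.sum_neg_distrib]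
        refine Finset.sum_congr rfl fun c _ => ?_
        rw [Finset.mul_sum, ← Finset.sum_neg_distrib]
        refine Finset.sum_congr rfl fun e _ => ?_
        rw [stmt18_scal_mul_single, smul_smul, ← AddMonoidAlgebra.single_neg, ← neg_smul]
        congr 1
        ring
    -- the key normal form of dπ
    have key : d π = ∑ c, ∑ b, AddMonoidAlgebra.single
        (Finsupp.single c 1 + Finsupp.single b 1 : Fin n →₀ ℕ)
        (ExteriorAlgebra.ι K (v c b)) := by
      calc d π
          = (∑ a, ∑ b, ∑ c, ∑ e, AddMonoidAlgebra.single
              (Finsupp.single c 1 + Finsupp.single b 1 : Fin n →₀ ℕ)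
              ((-((2:K)⁻¹ * (p a b * f c a e)))
                • ExteriorAlgebra.ι K (Pi.single e (1:K))))
            + (∑ a, ∑ b, ∑ c, ∑ e, AddMonoidAlgebra.single
              (Finsupp.single a 1 + Finsupp.single c 1 : Fin n →₀ ℕ)
              ((-((2:K)⁻¹ * (p a b * f c b e)))
                • ExteriorAlgebra.ι K (Pi.single e (1:K)))) := by
            rw [hπ, map_sum]
            simp only [map_sum, hterm, Finset.sum_add_distrib]
        _ = (∑ c, ∑ b, ∑ a, ∑ e, AddMonoidAlgebra.single
              (Finsupp.single c 1 + Finsupp.single b 1 : Fin n →₀ ℕ)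
              ((-((2:K)⁻¹ * (p a b * f c a e)))
                • ExteriorAlgebra.ι K (Pi.single e (1:K))))
            + (∑ c, ∑ b, ∑ a, ∑ e, AddMonoidAlgebra.single
              (Finsupp.single c 1 + Finsupp.single b 1 : Fin n →₀ ℕ)
              ((-((2:K)⁻¹ * (p a c * f b a e)))
                • ExteriorAlgebra.ι K (Pi.single e (1:K)))) := by
            congr 1
            · exact stmt18_sum3_rot _
            · rw [stmt18_sum3_swap]
              refine Finset.sum_congr rfl fun c _ => Finset.sum_congr rfl fun b _ =>
                Finset.sum_congr rfl fun a _ => Finset.sum_congr rfl fun e _ => ?_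
              rw [hp c a]
        _ = ∑ c, ∑ b, AddMonoidAlgebra.single
              (Finsupp.single c 1 + Finsupp.single b 1 : Fin n →₀ ℕ)
              (ExteriorAlgebra.ι K (v c b)) := by
            rw [← Finset.sum_add_distrib]
            refine Finset.sum_congr rfl fun c _ => ?_
            rw [← Finset.sum_add_distrib]
            refine Finset.sum_congr rfl fun b _ => ?_
            rw [hv, map_sum, stmt18_single_sum, ← Finset.sum_add_distrib]
            refine Finset.sum_congr rfl fun a _ => ?_
            rw [map_sum, stmt18_single_sum, ← Finset.sum_add_distrib]
            refine Finset.sum_congr rfl fun e _ => ?_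
            rw [← AddMonoidAlgebra.single_add, map_smul, ← add_smul]
            congr 2
            ring
    -- the coordinates of v
    have hvcoord : ∀ c b u : Fin n,
        v c b u = ∑ a, (-((2:K)⁻¹ * (p a b * f c a u + p a c * f b a u))) := by
      intro c b u
      have h := stmt18_coord (fun a e => -((2:K)⁻¹ * (p a b * f c a e + p a c * f b a e))) u
      rw [hv]
      exact h
    -- the scalar equivalence between coordinate vanishing and the target identity
    have hscal : ∀ c b u : Fin n,
        ((∑ a, (-((2:K)⁻¹ * (p a b * f c a u + p a c * f b a u)))) = 0
          ↔ (∑ e, (f c u e * p e b + f b u e * p c e)) = 0) := by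
      intro c b u
      have hrw : (∑ a, (-((2:K)⁻¹ * (p a b * f c a u + p a c * f b a u))))
          = (2:K)⁻¹ * ∑ e, (f c u e * p e b + f b u e * p c e) := by
        rw [Finset.mul_sum]
        refine Finset.sum_congr rfl fun a _ => ?_
        rw [hfanti c a u, hfanti b a u, hp a c]
        ring
      rw [hrw, mul_eq_zero]
      constructor
      · rintro (h | h)
        · exact absurd h (by norm_num)
        · exact h
      · exact fun h => Or.inr h
    -- v is symmetric
    have hvsymm : ∀ c b, v c b = v b c := by
      intro c b
      rw [hv]
      refine Finset.sum_congr rfl fun a _ => Finset.sum_congr rfl fun e _ => ?_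
      rw [hp a b, hp a c]
      ring_nf
    constructor
    · -- dπ = 0 → invariance
      intro h0
      intro a b c
      -- extract the coefficient of the monomial ξ_a ξ_b, coordinate c
      have hvab : v a b = 0 := by
        have hfin : (∑ c, ∑ b, Finsupp.single
            (Finsupp.single c 1 + Finsupp.single b 1 : Fin n →₀ ℕ)
            (ExteriorAlgebra.ι K (v c b))
            : (Fin n →₀ ℕ) →₀ ExteriorAlgebra K (Fin n → K)) = 0 := by
            rw [key] at h0
            have h := congrArg AddMonoidAlgebra.coeff h0
            simpa only [AddMonoidAlgebra.coeff_sum, AddMonoidAlgebra.coeff_single,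
              AddMonoidAlgebra.coeff_zero] using h
        have hEv := DFunLike.congr_fun hfin
          (Finsupp.single a 1 + Finsupp.single b 1 : Fin n →₀ ℕ)
        rw [Finsupp.finset_sum_apply] at hEv
        simp only [Finsupp.finset_sum_apply, Finsupp.single_apply, Finsupp.coe_zero, Pi.zero_apply] at hEv
        by_cases hab : a = b
        · subst hab
          have hsum : (∑ c', ∑ b', if (Finsupp.single c' 1 + Finsupp.single b' 1
                : Fin n →₀ ℕ) = Finsupp.single a 1 + Finsupp.single a 1 then
                ExteriorAlgebra.ι K (v c' b') else 0)
              = ExteriorAlgebra.ι K (v a a) := by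
            have hiff : ∀ c' b' : Fin n, ((Finsupp.single c' 1 + Finsupp.single b' 1
                : Fin n →₀ ℕ) = Finsupp.single a 1 + Finsupp.single a 1)
                ↔ (c' = a ∧ b' = a) := by
              intro c' b'
              rw [stmt18_pair_eq_iff]
              tauto
            calc (∑ c' : Fin n, ∑ b' : Fin n,
                  if (Finsupp.single c' 1 + Finsupp.single b' 1
                    : Fin n →₀ ℕ) = Finsupp.single a 1 + Finsupp.single a 1 then
                    ExteriorAlgebra.ι K (v c' b') else 0)
                = ∑ c' : Fin n, ∑ b' : Fin n,
                    if c' = a ∧ b' = a then ExteriorAlgebra.ι K (v c' b') else 0 :=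
                  Finset.sum_congr rfl fun c' _ => Finset.sum_congr rfl fun b' _ =>
                    if_congr (hiff c' b') rfl rfl
              _ = ExteriorAlgebra.ι K (v a a) := stmt18_sum_pair _ a a
          rw [hsum] at hEv
          exact (ExteriorAlgebra.ι_eq_zero_iff _).mp hEv
        · have hsum : (∑ c', ∑ b', if (Finsupp.single c' 1 + Finsupp.single b' 1
                : Fin n →₀ ℕ) = Finsupp.single a 1 + Finsupp.single b 1 then
                ExteriorAlgebra.ι K (v c' b') else 0)
              = ExteriorAlgebra.ι K (v a b) + ExteriorAlgebra.ι K (v b a) := by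
            have hsplit : ∀ c' b' : Fin n,
                (if (Finsupp.single c' 1 + Finsupp.single b' 1
                  : Fin n →₀ ℕ) = Finsupp.single a 1 + Finsupp.single b 1 then
                  ExteriorAlgebra.ι K (v c' b') else 0)
                = (if c' = a ∧ b' = b then ExteriorAlgebra.ι K (v c' b') else 0)
                  + (if c' = b ∧ b' = a then ExteriorAlgebra.ι K (v c' b') else 0) := by
              intro c' b'
              rw [if_congr (stmt18_pair_eq_iff c' b' a b) rfl rfl]
              by_cases h1 : c' = a ∧ b' = b
              · by_cases h2 : c' = b ∧ b' = a
                · exact absurd (h1.1.symm.trans h2.1) hab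
                · rw [if_pos (Or.inl h1), if_pos h1, if_neg h2, add_zero]
              · by_cases h2 : c' = b ∧ b' = a
                · rw [if_pos (Or.inr h2), if_neg h1, if_pos h2, zero_add]
                · rw [if_neg (by tauto), if_neg h1, if_neg h2, add_zero]
            simp only [hsplit, Finset.sum_add_distrib]
            rw [stmt18_sum_pair, stmt18_sum_pair]
          rw [hsum] at hEv
          have h2 : ExteriorAlgebra.ι K (v a b + v b a) = 0 := by
            rw [map_add, hEv]
          have h3 : v a b + v b a = 0 :=
            (ExteriorAlgebra.ι_eq_zero_iff _).mp h2
          rw [hvsymm b a] at h3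
          have : (2 : K) • v a b = 0 := by
            rw [two_smul]; exact h3
          funext u
          have hcu := congr_fun this u
          simp only [Pi.smul_apply, smul_eq_mul, Pi.zero_apply] at hcu
          have h2ne : (2 : K) ≠ 0 := two_ne_zero
          simp only [Pi.zero_apply]
          exact mul_left_cancel₀ h2ne (by rw [hcu, mul_zero])
      have := congr_fun hvab c
      rw [hvcoord] at this
      exact (hscal a b c).mp this
    · -- invariance → dπ = 0
      intro hinv
      have hv0 : ∀ c b, v c b = 0 := by
        intro c b
        funext u
        rw [hvcoord]
        exact (hscal c b u).mpr (hinv c b u)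
      rw [key]
      simp [hv0]
end
end
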